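/- For every k ≥ 1 there exists a bipartite graph G with bipartition (X, Y), |X| = 2k, |Y| = 3k, such that G has a subgraph H covering X with every vertex of X of degree exactly 2 in H and every vertex of Y of degree at most 2 in H, but for some vertex y ∈ Y, the graph G − y has no such subgraph covering X, even though G − y satisfies |N(S)| ≥ ((3k−1)/(2k))|S| for all S ⊆ X. -/

import Mathlib

open SimpleGraph


abbrev Vk (k : ℕ) := Sum (Fin (2*k)) (Sum (Fin (2*k)) (Fin k))

def rk (k : ℕ) (a b : Vk k) : Prop :=
  (∃ i, a = Sum.inl i ∧ b = Sum.inr (Sum.inl i)) ∨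
  (∃ i j, a = Sum.inl i ∧ b = Sum.inr (Sum.inr j))

def Gk (k : ℕ) : SimpleGraph (Vk k) := SimpleGraph.fromRel (rk k)

lemma Gk_adj {k : ℕ} (a b : Vk k) : (Gk k).Adj a b ↔ rk k a b ∨ rk k b a := by
  rw [Gk, SimpleGraph.fromRel_adj]
  constructor
  · rintro ⟨-, h⟩; exact h
  · rintro h
    refine ⟨?_, h⟩
    rcases h with (⟨i, rfl, rfl⟩ | ⟨i, j, rfl, rfl⟩) | (⟨i, rfl, rfl⟩ | ⟨i, j, rfl, rfl⟩) <;> simp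

def dk (k : ℕ) (i : Fin (2*k)) : Fin k := ⟨i.1 / 2, by have := i.2; omega⟩

def Hk (k : ℕ) : (Gk k).Subgraph where
  verts := Set.univ
  Adj a b :=
    (∃ i, a = Sum.inl i ∧ (b = Sum.inr (Sum.inl i) ∨ b = Sum.inr (Sum.inr (dk k i)))) ∨
    (∃ i, b = Sum.inl i ∧ (a = Sum.inr (Sum.inl i) ∨ a = Sum.inr (Sum.inr (dk k i))))
  adj_sub := by
    rintro a b (⟨i, rfl, (rfl | rfl)⟩ | ⟨i, rfl, (rfl | rfl)⟩) <;> rw [Gk_adj]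
    · exact Or.inl (Or.inl ⟨i, rfl, rfl⟩)
    · exact Or.inl (Or.inr ⟨i, dk k i, rfl, rfl⟩)
    · exact Or.inr (Or.inl ⟨i, rfl, rfl⟩)
    · exact Or.inr (Or.inr ⟨i, dk k i, rfl, rfl⟩)
  edge_vert _ := Set.mem_univ _
  symm := ⟨fun a b h => by
    rcases h with ⟨i, h1, h2⟩ | ⟨i, h1, h2⟩
    · exact Or.inr ⟨i, h1, h2⟩
    · exact Or.inl ⟨i, h1, h2⟩⟩

lemma Hk_nb_inl (k : ℕ) (i : Fin (2*k)) :
    (Hk k).neighborSet (Sum.inl i) = {Sum.inr (Sum.inl i), Sum.inr (Sum.inr (dk k i))} := by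
  ext v
  simp only [Subgraph.mem_neighborSet, Hk, Set.mem_insert_iff, Set.mem_singleton_iff]
  constructor
  · rintro (⟨i', h, hv⟩ | ⟨i', rfl, (h | h)⟩)
    · cases Sum.inl.inj h; tauto
    · exact absurd h (by simp)
    · exact absurd h (by simp)
  · rintro (rfl | rfl) <;> exact Or.inl ⟨i, rfl, by tauto⟩

lemma Hk_ncard_inl (k : ℕ) (i : Fin (2*k)) :
    ((Hk k).neighborSet (Sum.inl i)).ncard = 2 := by
  rw [Hk_nb_inl]; exact Set.ncard_pair (by simp)

lemma Hk_ncard_inr (k : ℕ) (w : Sum (Fin (2*k)) (Fin k)) :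
    ((Hk k).neighborSet (Sum.inr w)).ncard ≤ 2 := by
  rcases w with i | j
  · have : (Hk k).neighborSet (Sum.inr (Sum.inl i)) = {Sum.inl i} := by
      ext v
      simp only [Subgraph.mem_neighborSet, Hk, Set.mem_singleton_iff]
      constructor
      · rintro (⟨i', h, -⟩ | ⟨i', rfl, (h | h)⟩)
        · exact absurd h (by simp)
        · cases Sum.inl.inj (Sum.inr.inj h); rfl
        · exact absurd (Sum.inr.inj h) (by simp)
      · rintro rfl; exact Or.inr ⟨i, rfl, Or.inl rfl⟩
    rw [this]; simp
  · have hk2 : 2*j.1 < 2*k := by have := j.2; omega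
    have hk3 : 2*j.1+1 < 2*k := by have := j.2; omega
    have hsub : (Hk k).neighborSet (Sum.inr (Sum.inr j)) ⊆
        {Sum.inl ⟨2*j.1, hk2⟩, Sum.inl ⟨2*j.1+1, hk3⟩} := by
      rintro v hv
      simp only [Subgraph.mem_neighborSet, Hk] at hv
      rcases hv with ⟨i', h, -⟩ | ⟨i', rfl, (h | h)⟩
      · exact absurd h (by simp)
      · exact absurd (Sum.inr.inj h) (by simp)
      · have hd : j = dk k i' := Sum.inr.inj (Sum.inr.inj h)
        have : i'.1 / 2 = j.1 := by rw [hd]; rfl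
        have : i'.1 = 2*j.1 ∨ i'.1 = 2*j.1+1 := by omega
        simp only [Set.mem_insert_iff, Set.mem_singleton_iff, Sum.inl.injEq, Fin.ext_iff]
        omega
    calc _ ≤ _ := Set.ncard_le_ncard hsub (Set.toFinite _)
      _ ≤ 2 := le_trans (Set.ncard_insert_le _ _) (by simp)


lemma no_good (k : ℕ) (hk : 1 ≤ k) :
    ¬ ∃ H : (Gk k).Subgraph,
        (Sum.inr (Sum.inr ⟨0, hk⟩) : Vk k) ∉ H.verts ∧ Set.range Sum.inl ⊆ H.verts ∧
        (∀ x ∈ Set.range (Sum.inl : Fin (2*k) → Vk k), (H.neighborSet x).ncard = 2) ∧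
        (∀ z ∈ Set.range (Sum.inr : Fin (2*k) ⊕ Fin k → Vk k), (H.neighborSet z).ncard ≤ 2) := by
  classical
  rintro ⟨H, hy, -, hdX, hdY⟩
  set j₀ : Fin k := ⟨0, hk⟩ with hj₀
  -- every x has an H-neighbor in Y₂ \ {y₀}
  have key : ∀ i : Fin (2*k), ∃ j : Fin k,
      (Sum.inr (Sum.inr j) : Vk k) ∈ H.neighborSet (Sum.inl i) ∧ j ≠ j₀ := by
    intro i
    by_contra hcon
    push_neg at hcon
    have hsub : H.neighborSet (Sum.inl i) ⊆ {Sum.inr (Sum.inl i)} := by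
      intro v hv
      have hGv : (Gk k).Adj (Sum.inl i) v := H.adj_sub hv
      rw [Gk_adj] at hGv
      rcases hGv with (⟨i', h1, h2⟩ | ⟨i', j, h1, h2⟩) | (⟨i', h1, h2⟩ | ⟨i', j, h1, h2⟩)
      · cases Sum.inl.inj h1; exact h2 ▸ rfl
      · subst h2
        rcases eq_or_ne j j₀ with rfl | hne
        · exact absurd ((hv : H.Adj _ _).snd_mem) hy
        · exact absurd (hcon j hv) hne
      · exact absurd h2 (by simp)
      · exact absurd h2 (by simp)
    have := Set.ncard_le_ncard hsub (Set.toFinite _)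
    rw [hdX (Sum.inl i) ⟨i, rfl⟩] at this
    simp at this
  choose f hf1 hf2 using key
  have maps : ∀ i ∈ (Finset.univ : Finset (Fin (2*k))),
      f i ∈ (Finset.univ : Finset (Fin k)).erase j₀ := by
    intro i _
    exact Finset.mem_erase.2 ⟨hf2 i, Finset.mem_univ _⟩
  have fib : ∀ b ∈ (Finset.univ : Finset (Fin k)).erase j₀,
      ((Finset.univ : Finset (Fin (2*k))).filter (fun i => f i = b)).card ≤ 2 := by
    intro b _
    set u := (Finset.univ : Finset (Fin (2*k))).filter (fun i => f i = b) with hu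
    have himg : (u.image (fun i => (Sum.inl i : Vk k))).card = u.card :=
      Finset.card_image_of_injective _ Sum.inl_injective
    have hsub2 : ↑(u.image (fun i => (Sum.inl i : Vk k))) ⊆
        H.neighborSet (Sum.inr (Sum.inr b)) := by
      intro v hv
      simp only [Finset.coe_image, Set.mem_image, Finset.mem_coe, hu,
        Finset.mem_filter, Finset.mem_univ, true_and] at hv
      obtain ⟨i, hfi, rfl⟩ := hv
      have := hf1 i
      rw [hfi] at this
      exact (this : H.Adj _ _).symm
    calc u.card = (↑(u.image (fun i => (Sum.inl i : Vk k))) : Set (Vk k)).ncard := by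
          rw [Set.ncard_coe_finset, himg]
      _ ≤ (H.neighborSet (Sum.inr (Sum.inr b))).ncard :=
          Set.ncard_le_ncard hsub2 (Set.toFinite _)
      _ ≤ 2 := hdY _ ⟨Sum.inr b, rfl⟩
  have hcard := Finset.card_le_mul_card_image_of_maps_to maps 2 fib
  rw [Finset.card_univ, Fintype.card_fin, Finset.card_erase_of_mem (Finset.mem_univ _),
    Finset.card_univ, Fintype.card_fin] at hcard
  omega

lemma hall (k : ℕ) (hk : 1 ≤ k) (S : Set (Vk k)) (hS : S ⊆ Set.range Sum.inl) :
    (3 * k - 1) * S.ncard ≤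
      2 * k * {z | z ≠ (Sum.inr (Sum.inr ⟨0, hk⟩) : Vk k) ∧ ∃ x ∈ S, (Gk k).Adj x z}.ncard := by
  classical
  rcases S.eq_empty_or_nonempty with rfl | ⟨x₀, hx₀⟩
  · simp
  obtain ⟨i₀, rfl⟩ := hS hx₀
  set j₀ : Fin k := ⟨0, hk⟩ with hj₀
  set N := {z | z ≠ (Sum.inr (Sum.inr j₀) : Vk k) ∧ ∃ x ∈ S, (Gk k).Adj x z} with hN
  set g : Vk k → Vk k := Sum.elim (fun i => Sum.inr (Sum.inl i)) Sum.inr with hg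
  set A := g '' S with hA
  set B := (fun j => (Sum.inr (Sum.inr j) : Vk k)) '' {j : Fin k | j ≠ j₀} with hB
  have hAN : A ⊆ N := by
    rintro a ⟨x, hx, rfl⟩
    obtain ⟨i, rfl⟩ := hS hx
    refine ⟨by simp [hg], Sum.inl i, hx, ?_⟩
    rw [Gk_adj]
    exact Or.inl (Or.inl ⟨i, rfl, rfl⟩)
  have hBN : B ⊆ N := by
    rintro b ⟨j, hj, rfl⟩
    refine ⟨by simpa using hj, Sum.inl i₀, hx₀, ?_⟩
    rw [Gk_adj]
    exact Or.inl (Or.inr ⟨i₀, j, rfl, rfl⟩)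
  have hdisj : Disjoint A B := by
    rw [Set.disjoint_left]
    rintro a ⟨x, hx, rfl⟩ ⟨j, hj, hb⟩
    obtain ⟨i, rfl⟩ := hS hx
    simp [hg] at hb
  have hAcard : A.ncard = S.ncard := by
    apply Set.ncard_image_of_injOn
    intro a ha b hb hab
    obtain ⟨i, rfl⟩ := hS ha
    obtain ⟨i', rfl⟩ := hS hb
    simpa [hg] using hab
  have hBcard : B.ncard = k - 1 := by
    rw [hB, Set.ncard_image_of_injective _ (fun a b h => Sum.inr.inj (Sum.inr.inj h))]
    have : {j : Fin k | j ≠ j₀} = {j₀}ᶜ := by ext j; simp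
    rw [this, Set.ncard_eq_toFinset_card']
    simp [Finset.card_compl]
  have hNge : S.ncard + (k - 1) ≤ N.ncard := by
    have h1 := Set.ncard_le_ncard (Set.union_subset hAN hBN) (Set.toFinite N)
    rwa [Set.ncard_union_eq hdisj (Set.toFinite _) (Set.toFinite _), hAcard, hBcard] at h1
  have hSle : S.ncard ≤ 2 * k := by
    have h2 := Set.ncard_le_ncard hS (Set.toFinite _)
    have : (Set.range (Sum.inl : Fin (2*k) → Vk k)).ncard = 2 * k := by
      rw [Set.ncard_eq_toFinset_card']
      simp [Set.toFinset_range, Finset.card_image_of_injective _ Sum.inl_injective]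
    omega
  have h3 : (k - 1) * S.ncard ≤ (k - 1) * (2 * k) := Nat.mul_le_mul_left _ hSle
  calc (3 * k - 1) * S.ncard = 2 * k * S.ncard + (k - 1) * S.ncard := by
        have : 3 * k - 1 = 2 * k + (k - 1) := by omega
        rw [this, add_mul]
    _ ≤ 2 * k * S.ncard + (k - 1) * (2 * k) := by omega
    _ ≤ 2 * k * S.ncard + 2 * k * (k - 1) := by rw [mul_comm (k-1) (2*k)]
    _ = 2 * k * (S.ncard + (k - 1)) := by ring
    _ ≤ 2 * k * N.ncard := Nat.mul_le_mul_left _ hNge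


/-- sharpness of the constant 3/2 in the Hall-type covering lemma. -/
theorem stmt_2 (k : ℕ) (hk : 1 ≤ k) :
    ∃ (V : Type) (_ : Fintype V) (G : SimpleGraph V) (X Y : Set V),
      Disjoint X Y ∧ X ∪ Y = Set.univ ∧
      (∀ a b, G.Adj a b → (a ∈ X ∧ b ∈ Y) ∨ (a ∈ Y ∧ b ∈ X)) ∧
      X.ncard = 2 * k ∧ Y.ncard = 3 * k ∧
      -- G has a good subgraph covering X
      (∃ H : G.Subgraph, X ⊆ H.verts ∧
        (∀ x ∈ X, (H.neighborSet x).ncard = 2) ∧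
        (∀ y ∈ Y, (H.neighborSet y).ncard ≤ 2)) ∧
      -- but for some y ∈ Y, G − y has no such subgraph,
      (∃ y ∈ Y,
        (¬ ∃ H : G.Subgraph, y ∉ H.verts ∧ X ⊆ H.verts ∧
          (∀ x ∈ X, (H.neighborSet x).ncard = 2) ∧
          (∀ z ∈ Y, (H.neighborSet z).ncard ≤ 2)) ∧
        -- even though G − y satisfies the Hall condition with ratio (3k−1)/(2k)
        (∀ S : Set V, S ⊆ X →
          (3 * k - 1) * S.ncard ≤
            2 * k * {z | z ≠ y ∧ ∃ x ∈ S, G.Adj x z}.ncard)) := by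
  classical
  refine ⟨Vk k, inferInstance, Gk k, Set.range Sum.inl, Set.range Sum.inr,
    Set.isCompl_range_inl_range_inr.disjoint, Set.range_inl_union_range_inr, ?_, ?_, ?_, ?_,
    ⟨Sum.inr (Sum.inr ⟨0, hk⟩), ⟨Sum.inr ⟨0, hk⟩, rfl⟩, ?_, ?_⟩⟩
  · intro a b hab
    rw [Gk_adj] at hab
    rcases hab with (⟨i, rfl, rfl⟩ | ⟨i, j, rfl, rfl⟩) | (⟨i, rfl, rfl⟩ | ⟨i, j, rfl, rfl⟩) <;>
      simp [Set.mem_range]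
  · rw [Set.ncard_eq_toFinset_card']
    simp [Set.toFinset_range, Finset.card_image_of_injective _ Sum.inl_injective]
  · rw [Set.ncard_eq_toFinset_card']
    simp [Set.toFinset_range, Finset.card_image_of_injective _ Sum.inr_injective]
    omega
  · refine ⟨Hk k, fun _ _ => Set.mem_univ _, ?_, ?_⟩
    · rintro x ⟨i, rfl⟩; exact Hk_ncard_inl k i
    · rintro y ⟨w, rfl⟩; exact Hk_ncard_inr k w
  · rintro ⟨H, h1, h2, h3, h4⟩
    exact no_good k hk ⟨H, h1, h2, h3, h4⟩
  · intro S hS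
    exact hall k hk S hS
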